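/- Let f(x) = (1/2)‖x‖_c² and M(x) = inf_{u ∈ ℝ^d} { f(u) + (1/(2μ))‖x−u‖_s² } for μ > 0, where ‖·‖_s ≤ u_{cs}‖·‖_c with u_{cs} ≥ 1. Then for all x ∈ ℝ^d, M(x) ≤ (u_{cs}²/(u_{cs}²+μ)) f(x), i.e., f(x) ≥ (1 + μ/u_{cs}²) M(x). -/

import Mathlib

/-- A function `n : ℝ^d → ℝ` is a norm. -/
structure IsNorm {d : ℕ} (n : (Fin d → ℝ) → ℝ) : Prop where
  nonneg : ∀ x, 0 ≤ n x
  definite : ∀ x, n x = 0 → x = 0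
  homog : ∀ (a : ℝ) (x), n (a • x) = |a| * n x
  triangle : ∀ x y, n (x + y) ≤ n x + n y

/-- upper bound for the generalized Moreau envelope,
    `M(x) ≤ (u_cs²/(u_cs²+μ)) f(x)` where `f(x) = ‖x‖_c²/2`. -/
theorem stmt_1 {d : ℕ} (nc ns : (Fin d → ℝ) → ℝ)
    (hnc : IsNorm nc) (hns : IsNorm ns)
    (μ ucs : ℝ) (hμ : 0 < μ) (hucs : 1 ≤ ucs)
    (hle : ∀ x, ns x ≤ ucs * nc x) :
    ∀ x : Fin d → ℝ,
      (⨅ u : Fin d → ℝ, ((nc u) ^ 2 / 2 + (ns (x - u)) ^ 2 / (2 * μ)))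
        ≤ (ucs ^ 2 / (ucs ^ 2 + μ)) * ((nc x) ^ 2 / 2) := by
  intro x
  have hucs0 : (0:ℝ) < ucs := lt_of_lt_of_le one_pos hucs
  have hden : (0:ℝ) < ucs ^ 2 + μ := by positivity
  set t : ℝ := ucs ^ 2 / (ucs ^ 2 + μ) with ht
  have ht0 : 0 ≤ t := by positivity
  have ht1 : t ≤ 1 := by
    rw [ht, div_le_one hden]; linarith
  have hbdd : BddBelow (Set.range fun u : Fin d → ℝ =>
      ((nc u) ^ 2 / 2 + (ns (x - u)) ^ 2 / (2 * μ))) := by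
    refine ⟨0, ?_⟩
    rintro y ⟨u, rfl⟩
    have h1 := hnc.nonneg u
    have h2 := hns.nonneg (x - u)
    positivity
  refine le_trans (ciInf_le hbdd (t • x)) ?_
  have hx : x - t • x = (1 - t) • x := by
    rw [sub_smul, one_smul]
  have h1 : nc (t • x) = t * nc x := by
    rw [hnc.homog, abs_of_nonneg ht0]
  have h2 : ns (x - t • x) = (1 - t) * ns x := by
    rw [hx, hns.homog, abs_of_nonneg (by linarith)]
  rw [h1, h2]
  have hns' : ns x ≤ ucs * nc x := hle x
  have hnsn : 0 ≤ ns x := hns.nonneg x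
  have hncn : 0 ≤ nc x := hnc.nonneg x
  have hns2 : (ns x) ^ 2 ≤ ucs ^ 2 * (nc x) ^ 2 := by nlinarith
  rw [ht]
  have h1t : (1 : ℝ) - ucs ^ 2 / (ucs ^ 2 + μ) = μ / (ucs ^ 2 + μ) := by
    field_simp
    ring
  rw [h1t]
  have main : (ucs ^ 2 / (ucs ^ 2 + μ) * nc x) ^ 2 / 2 + (μ / (ucs ^ 2 + μ) * ns x) ^ 2 / (2 * μ)
      = (ucs^4 * nc x^2 + μ * ns x^2) / (2 * (ucs^2+μ)^2) := by
    field_simp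
  rw [main, div_le_iff₀ (by positivity)]
  have hr : ucs ^ 2 / (ucs ^ 2 + μ) * (nc x ^ 2 / 2) * (2 * (ucs ^ 2 + μ) ^ 2)
      = ucs^2 * nc x^2 * (ucs^2+μ) := by
    field_simp
  rw [hr]
  nlinarith [hns2, hμ, sq_nonneg (nc x)]
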